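/- For every integer t ≥ 1 and every real g with 0 ≤ g ≤ 1, (1−g)^t · (2/(t+1) + g) ≤ 2/(t+1). -/
import Mathlib

lemma stmt_7_aux (t : ℕ) (ht : 1 ≤ t) (g : ℝ) (hg0 : 0 ≤ g) (hg1 : g ≤ 1) :
    (1 - g) ^ t * (2 + g * (t + 1)) ≤ 2 := by
  induction t, ht using Nat.le_induction with
  | base => push_cast; nlinarith
  | succ n hn ih =>
      have hpow : (0:ℝ) ≤ (1 - g) ^ n := pow_nonneg (by linarith) n
      have hn0 : (0:ℝ) ≤ (n:ℝ) := Nat.cast_nonneg n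
      push_cast [pow_succ] at ih ⊢
      nlinarith [mul_nonneg hpow (mul_nonneg hg0 hg0), mul_nonneg (mul_nonneg hpow hg0) hn0]

/-- For every integer `t ≥ 1` and real `0 ≤ g ≤ 1`,
`(1−g)^t · (2/(t+1) + g) ≤ 2/(t+1)`. -/
theorem stmt_7 (t : ℕ) (ht : 1 ≤ t) (g : ℝ) (hg0 : 0 ≤ g) (hg1 : g ≤ 1) :
    (1 - g) ^ t * (2 / (t + 1 : ℝ) + g) ≤ 2 / (t + 1 : ℝ) := by
  have ht1 : (0:ℝ) < (t:ℝ) + 1 := by positivity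
  have h := stmt_7_aux t ht g hg0 hg1
  have heq : (1 - g) ^ t * (2 / (t + 1 : ℝ) + g)
      = (1 - g) ^ t * (2 + g * (t + 1)) / ((t:ℝ) + 1) := by
    field_simp
  rw [heq]
  gcongr
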